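/- arXiv:1907.07839 — 2 statements merged into one kernel-verified Lean document; each statement's English description precedes it below -/
import Mathlib

section
/- Let q be odd and A ∈ M_{d×d}(K_∞) symmetric. Then the Gaussian integral ∫_{𝕋^d} ψ(u^T A u) du equals the product over i from 1 to d of 𝒢(λ_i), where λ_1,…,λ_d are the diagonal entries of γ^T A γ for any γ ∈ GL_d(O_∞) diagonalizing A, and 𝒢(f) denotes the one-dimensional Gaussian integral ∫_𝕋 ψ(f u²) du. -/
/-!
Common setup: `K_∞ = 𝔽_q((1/t))` is modeled as `LaurentSeries Fq` in the variable `X = 1/t`,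
so that an element `Σ_{i ≤ N} a_i t^i` of `K_∞` corresponds to the Hahn series
`Σ_{n ≥ -N} a_{-n} X^n`.  The degree in `t` is the negative of the Hahn-series order,
the absolute value is `|α| = q^{deg_t α}`, and the standard additive character is
`ψ(α) = e_q(coefficient of t^{-1}) = e_q(coefficient of X^1)`.
-/

open scoped BigOperators Classical
noncomputable section



namespace FF

variable {Fq : Type*} [Field Fq] [Fintype Fq]

/-- The element `t = X⁻¹` of `K_∞`. -/
def tK : LaurentSeries Fq := HahnSeries.single (-1 : ℤ) 1

/-- Degree in `t` of a Laurent series (degree of `0` is `0` by convention). -/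
def tdeg (α : LaurentSeries Fq) : ℤ := -α.order

/-- The absolute value `|α| = q^{deg_t α}` on `K_∞`, with `|0| = 0`. -/
def absv (α : LaurentSeries Fq) : ℝ :=
  if α = 0 then 0 else (Fintype.card Fq : ℝ) ^ (-α.order)

/-- The embedding `𝔽_q[t] → K_∞`. -/
def toK (p : Polynomial Fq) : LaurentSeries Fq := Polynomial.eval₂ HahnSeries.C tK p

/-- The standard additive character `ψ` of `K_∞` attached to a character `e` of `𝔽_q`. -/
def psi (e : AddChar Fq ℂ) (α : LaurentSeries Fq) : ℂ := e (α.coeff 1)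

/-- The polynomial `Σ_{i<N} c_i t^i` attached to a coefficient tuple. -/
def polyOf {N : ℕ} (c : Fin N → Fq) : Polynomial Fq :=
  ∑ i : Fin N, Polynomial.C (c i) * Polynomial.X ^ (i : ℕ)

/-- Absolute value of a polynomial: `|p| = q^{deg p}`, `|0| = 0`. -/
def absP (p : Polynomial Fq) : ℝ :=
  if p = 0 then 0 else (Fintype.card Fq : ℝ) ^ p.natDegree

/-- The part `((γ))` of `γ` supported in strictly negative `t`-degrees. -/
def fracPart (γ : LaurentSeries Fq) : LaurentSeries Fq where
  coeff n := if 1 ≤ n then γ.coeff n else 0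
  isPWO_support' := γ.isPWO_support'.mono (fun n hn => by
    by_cases h : (1 : ℤ) ≤ n <;> simp_all [Function.support])

/-- A canonical choice of inverse of `x` modulo `c` (junk value `0` if not coprime). -/
def modInv (x c : Polynomial Fq) : Polynomial Fq :=
  if h : IsCoprime x c then h.choose else 0

/-- Riemann sums approximating the Haar integral (normalized by `μ(𝕋) = 1`) of `w`
over the ball `{|α| < q^Y}`, at resolution `M`: the ball is partitioned into `q^M`
sub-balls of measure `q^{Y-M}` with representatives `Σ_{0 ≤ j < M} c_j t^{Y-1-j}`. -/
def ballSum (Y : ℤ) (M : ℕ) (w : LaurentSeries Fq → ℂ) : ℂ :=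
  ((Fintype.card Fq : ℂ) ^ Y * ((Fintype.card Fq : ℂ) ^ M)⁻¹) *
    ∑ c : Fin M → Fq, w (∑ j : Fin M, HahnSeries.single ((1 : ℤ) - Y + (j : ℕ)) (c j))

/-- Riemann sums approximating the Haar integral of `w` over `𝕋^d` at resolution `M`. -/
def cubeSum (d M : ℕ) (w : (Fin d → LaurentSeries Fq) → ℂ) : ℂ :=
  (((Fintype.card Fq : ℂ) ^ (d * M))⁻¹) *
    ∑ c : Fin d → Fin M → Fq,
      w (fun i => ∑ j : Fin M, HahnSeries.single (((j : ℕ) : ℤ) + 1) (c i j))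

end FF

namespace FF
variable {Fq : Type*} [Field Fq] [Fintype Fq]

/-- The Gauss sum `G(f) = Σ_{x ∈ 𝔽_q} e_q(a_f x²)` attached to the top-degree (in `t`)
coefficient `a_f` of `f`. -/
def gaussSumTop (e : AddChar Fq ℂ) (f : LaurentSeries Fq) : ℂ :=
  ∑ x : Fq, e (f.coeff f.order * x ^ 2)

/-- The one-dimensional Gaussian integral factor `𝒢(f)`:
`min(|f|^{-1/2},1)` if `ord f` is even, `|f|^{-1/2} ε_f` if `ord f ≥ 1` is odd,
and `1` otherwise. -/
def gaussFactor (e : AddChar Fq ℂ) (f : LaurentSeries Fq) : ℂ :=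
  if f = 0 then 1
  else if Even (tdeg f) then ((min ((Real.sqrt (absv f))⁻¹) 1 : ℝ) : ℂ)
  else if 1 ≤ tdeg f then
    (((Real.sqrt (absv f))⁻¹ : ℝ) : ℂ) * (gaussSumTop e f / ‖gaussSumTop e f‖)
  else 1

end FF

set_option linter.unusedSectionVars false

namespace FF
variable {Fq : Type*} [Field Fq] [Fintype Fq]

/-! ### Order lower bound predicate -/

/-- `Og k x` : all coefficients of `x` below `k` vanish. -/
def Og (k : ℤ) (x : LaurentSeries Fq) : Prop := ∀ n < k, x.coeff n = 0

lemma og_mono {k k' : ℤ} (h : k' ≤ k) {x : LaurentSeries Fq} (hx : Og k x) : Og k' x :=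
  fun n hn => hx n (lt_of_lt_of_le hn h)

lemma og_zero (k : ℤ) : Og k (0 : LaurentSeries Fq) := fun _ _ => HahnSeries.coeff_zero

lemma og_add {k : ℤ} {x y : LaurentSeries Fq} (hx : Og k x) (hy : Og k y) : Og k (x + y) :=
  fun n hn => by rw [HahnSeries.coeff_add, hx n hn, hy n hn, add_zero]

lemma og_neg {k : ℤ} {x : LaurentSeries Fq} (hx : Og k x) : Og k (-x) :=
  fun n hn => by rw [HahnSeries.coeff_neg, hx n hn, neg_zero]

lemma og_sub {k : ℤ} {x y : LaurentSeries Fq} (hx : Og k x) (hy : Og k y) : Og k (x - y) := by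
  rw [sub_eq_add_neg]; exact og_add hx (og_neg hy)

lemma coeff_finsum {ι : Type*} (s : Finset ι) (f : ι → LaurentSeries Fq) (n : ℤ) :
    (∑ i ∈ s, f i).coeff n = ∑ i ∈ s, (f i).coeff n :=
  map_sum (HahnSeries.coeff.addMonoidHom n) f s

lemma og_sum {ι : Type*} {k : ℤ} {s : Finset ι} {f : ι → LaurentSeries Fq}
    (h : ∀ i ∈ s, Og k (f i)) : Og k (∑ i ∈ s, f i) := fun n hn => by
  rw [coeff_finsum]
  exact Finset.sum_eq_zero fun i hi => h i hi n hn

lemma og_mul {kx ky : ℤ} {x y : LaurentSeries Fq} (hx : Og kx x) (hy : Og ky y) :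
    Og (kx + ky) (x * y) := by
  intro n hn
  rw [HahnSeries.coeff_mul]
  refine Finset.sum_eq_zero fun ij hij => ?_
  rw [Finset.mem_addAntidiagonal] at hij
  rcases lt_or_ge ij.1 kx with h | h
  · rw [hx _ h, zero_mul]
  · have hsum := hij.2.2
    rw [hy _ (by omega), mul_zero]

lemma og_order (x : LaurentSeries Fq) : Og x.order x :=
  fun _ hn => HahnSeries.coeff_eq_zero_of_lt_order hn

lemma og_of_order_le {k : ℤ} {x : LaurentSeries Fq} (h : k ≤ x.order) : Og k x :=
  og_mono h (og_order x)

lemma one_lt_q : (1 : ℝ) < (Fintype.card Fq : ℝ) := by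
  exact_mod_cast Fintype.one_lt_card

lemma q_pos : (0 : ℝ) < (Fintype.card Fq : ℝ) := lt_trans one_pos (one_lt_q (Fq := Fq))

lemma og_of_absv_le_one {x : LaurentSeries Fq} (h : absv x ≤ 1) : Og 0 x := by
  by_cases hx : x = 0
  · subst hx; exact og_zero 0
  · have h' : (Fintype.card Fq : ℝ) ^ (-x.order) ≤ 1 := by
      simpa [absv, hx] using h
    have : ¬ (0 : ℤ) < -x.order := by
      intro hlt
      have h2 := (zpow_right_strictMono₀ (one_lt_q (Fq := Fq))) hlt
      have h2' : (1 : ℝ) < (Fintype.card Fq : ℝ) ^ (-x.order) := by simpa using h2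
      exact absurd h' (not_le.mpr h2')
    exact og_of_order_le (by omega)

lemma absv_eq_one_order {x : LaurentSeries Fq} (h : absv x = 1) : x ≠ 0 ∧ x.order = 0 := by
  have hx : x ≠ 0 := by
    intro h0; rw [absv, if_pos h0] at h; norm_num at h
  refine ⟨hx, ?_⟩
  have h' : (Fintype.card Fq : ℝ) ^ (-x.order) = (Fintype.card Fq : ℝ) ^ (0 : ℤ) := by
    rw [zpow_zero]; simpa [absv, hx] using h
  have := zpow_right_injective₀ (q_pos (Fq := Fq)) (ne_of_gt (one_lt_q (Fq := Fq))) h'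
  omega

/-- The valuation ring `O_∞` as a subring. -/
def Oring : Subring (LaurentSeries Fq) where
  carrier := {x | Og 0 x}
  zero_mem' := og_zero 0
  one_mem' := fun n hn => by
    rw [HahnSeries.coeff_one]; exact if_neg (by omega)
  add_mem' ha hb := og_add ha hb
  neg_mem' ha := og_neg ha
  mul_mem' {a b} ha hb := by simpa using og_mul ha hb

lemma og_adjugate {d : ℕ} (γ : Matrix (Fin d) (Fin d) (LaurentSeries Fq))
    (hγ : ∀ i j, Og 0 (γ i j)) (i j : Fin d) : Og 0 (γ.adjugate i j) := by
  let γ' : Matrix (Fin d) (Fin d) (Oring (Fq := Fq)) := fun i j => ⟨γ i j, hγ i j⟩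
  have hmap : (Oring (Fq := Fq)).subtype.mapMatrix γ' = γ := by
    ext i j; rfl
  have h := RingHom.map_adjugate (Oring (Fq := Fq)).subtype γ'
  rw [hmap] at h
  rw [← h]
  exact (γ'.adjugate i j).2

end FF

namespace FF
variable {Fq : Type*} [Field Fq] [Fintype Fq]

/-! ### Sample points -/

/-- The sample point of the cube attached to a coefficient tuple. -/
def samp {M : ℕ} (c : Fin M → Fq) : LaurentSeries Fq :=
  ∑ j : Fin M, HahnSeries.single (((j : ℕ) : ℤ) + 1) (c j)

lemma samp_coeff {M : ℕ} (c : Fin M → Fq) (j : Fin M) :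
    (samp c).coeff (((j : ℕ) : ℤ) + 1) = c j := by
  rw [samp, coeff_finsum]
  rw [Finset.sum_eq_single j]
  · rw [HahnSeries.coeff_single, if_pos rfl]
  · intro i _ hij
    rw [HahnSeries.coeff_single]
    refine if_neg fun h => hij ?_
    have : (i : ℕ) = (j : ℕ) := by omega
    exact Fin.ext this
  · intro h; exact absurd (Finset.mem_univ j) h

lemma samp_coeff_out {M : ℕ} (c : Fin M → Fq) {n : ℤ} (h : n < 1 ∨ (M : ℤ) < n) :
    (samp c).coeff n = 0 := by
  rw [samp, coeff_finsum]
  refine Finset.sum_eq_zero fun j _ => ?_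
  rw [HahnSeries.coeff_single]
  refine if_neg fun hn => ?_
  have hj : (j : ℕ) < M := j.isLt
  omega

lemma og_one_samp {M : ℕ} (c : Fin M → Fq) : Og 1 (samp c) :=
  fun _ hn => samp_coeff_out c (Or.inl hn)

lemma samp_inj {M : ℕ} {c c' : Fin M → Fq} (h : samp c = samp c') : c = c' := by
  funext j
  rw [← samp_coeff c j, ← samp_coeff c' j, h]

/-! ### psi basics -/

lemma psi_add (e : AddChar Fq ℂ) (α β : LaurentSeries Fq) :
    psi e (α + β) = psi e α * psi e β := by
  rw [psi, psi, psi, HahnSeries.coeff_add, AddChar.map_add_eq_mul]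

lemma psi_sum (e : AddChar Fq ℂ) {ι : Type*} (s : Finset ι) (f : ι → LaurentSeries Fq) :
    psi e (∑ i ∈ s, f i) = ∏ i ∈ s, psi e (f i) := by
  classical
  induction s using Finset.induction_on with
  | empty => simp [psi, AddChar.map_zero_eq_one]
  | insert x s hx ih =>
      rw [Finset.sum_insert hx, Finset.prod_insert hx, psi_add, ih]

/-! ### Character sums -/

lemma sum_char_mul {e : AddChar Fq ℂ} (he : e ≠ 1) (b : Fq) :
    ∑ t : Fq, e (b * t) = if b = 0 then (Fintype.card Fq : ℂ) else 0 := by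
  have h := AddChar.sum_mulShift b (AddChar.IsPrimitive.of_ne_one he)
  simp_rw [mul_comm] at h
  rw [h]
  split_ifs <;> simp

lemma conj_addChar (e : AddChar Fq ℂ) (z : Fq) : (starRingEnd ℂ) (e z) = e (-z) := by
  have h1 : e z * e (-z) = 1 := by
    rw [← AddChar.map_add_eq_mul, add_neg_cancel, AddChar.map_zero_eq_one]
  have hpow : e z ^ Fintype.card Fq = 1 := by
    rw [← AddChar.map_nsmul_eq_pow, card_nsmul_eq_zero, AddChar.map_zero_eq_one]
  have habs : ‖e z‖ = 1 := by
    have h2 := congrArg norm hpow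
    rw [norm_pow, norm_one] at h2
    have h3 : (0 : ℝ) ≤ ‖e z‖ := norm_nonneg _
    have hcard : Fintype.card Fq ≠ 0 := Fintype.card_ne_zero
    rcases (pow_eq_one_iff_cases.mp h2) with h | h | h
    · exact absurd h hcard
    · exact h
    · exfalso; rw [h.1] at h3; norm_num at h3
  have h2 : e z * (starRingEnd ℂ) (e z) = 1 := by
    rw [Complex.mul_conj]
    norm_cast
    rw [← Complex.sq_norm, habs]; norm_num
  have hz : e z ≠ 0 := by
    intro h0; rw [h0, zero_mul] at h1; norm_num at h1
  exact mul_left_cancel₀ hz (h2.trans h1.symm)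

lemma two_ne_zero_of_odd_card (hq : Odd (Fintype.card Fq)) : (2 : Fq) ≠ 0 := by
  intro h
  have h2 : ringChar Fq ∣ 2 := ringChar.dvd (by exact_mod_cast h)
  have hne1 : ringChar Fq ≠ 1 := CharP.ringChar_ne_one
  have hchar : ringChar Fq = 2 := by
    rcases (Nat.dvd_prime Nat.prime_two).mp h2 with h' | h'
    · exact absurd h' hne1
    · exact h'
  haveI : Fact (Nat.Prime 2) := ⟨Nat.prime_two⟩
  have hdvd : (2 : ℕ) ∣ Fintype.card Fq :=
    (prime_dvd_char_iff_dvd_card 2).mp (hchar ▸ dvd_refl _)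
  rw [← Nat.not_even_iff_odd] at hq
  exact hq (even_iff_two_dvd.mpr hdvd)

lemma gauss_abs {e : AddChar Fq ℂ} (he : e ≠ 1) (h2 : (2 : Fq) ≠ 0) {b : Fq} (hb : b ≠ 0) :
    ‖∑ x : Fq, e (b * x * x)‖ = Real.sqrt (Fintype.card Fq) := by
  classical
  set G := ∑ x : Fq, e (b * x * x) with hG
  have hconj : (starRingEnd ℂ) G = ∑ y : Fq, e (-(b * y * y)) := by
    rw [hG, map_sum]
    exact Finset.sum_congr rfl fun y _ => conj_addChar e _
  have hGG : G * (starRingEnd ℂ) G = (Fintype.card Fq : ℂ) := by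
    rw [hconj, hG, Finset.sum_mul_sum]
    have hterm : ∀ x y : Fq, e (b * x * x) * e (-(b * y * y)) = e (b * x * x - b * y * y) := by
      intro x y
      rw [← AddChar.map_add_eq_mul]
      ring_nf
    simp_rw [hterm]
    -- change of variables (s, t) ↦ (s + t, s - t)
    have e1 : (∑ x : Fq, ∑ y : Fq, e (b * x * x - b * y * y))
        = ∑ p : Fq × Fq, e (b * p.1 * p.1 - b * p.2 * p.2) :=
      (Fintype.sum_prod_type (fun p : Fq × Fq => e (b * p.1 * p.1 - b * p.2 * p.2))).symm
    have e2 : (∑ s : Fq, ∑ t : Fq, e ((4 * b * s) * t))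
        = ∑ p : Fq × Fq, e ((4 * b * p.1) * p.2) :=
      (Fintype.sum_prod_type (fun p : Fq × Fq => e ((4 * b * p.1) * p.2))).symm
    have hcv : (∑ x : Fq, ∑ y : Fq, e (b * x * x - b * y * y))
        = ∑ s : Fq, ∑ t : Fq, e ((4 * b * s) * t) := by
      rw [e1, e2]
      have hbij : Function.Bijective (fun p : Fq × Fq => (p.1 + p.2, p.1 - p.2)) := by
        refine Function.bijective_iff_has_inverse.mpr
          ⟨fun p => ((p.1 + p.2) / 2, (p.1 - p.2) / 2), fun p => ?_, fun p => ?_⟩ <;>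
        · ext <;> field_simp <;> ring
      rw [← Function.Bijective.sum_comp hbij (fun p => e (b * p.1 * p.1 - b * p.2 * p.2))]
      refine Finset.sum_congr rfl fun p _ => ?_
      simp only []
      congr 1
      ring
    rw [hcv]
    have h4 : (4 : Fq) ≠ 0 := by
      intro h4
      have h22 : (2 : Fq) * 2 = 0 := by rw [← h4]; norm_num
      rcases mul_eq_zero.mp h22 with h' | h' <;> exact h2 h'
    have hinner : ∀ s : Fq, ∑ t : Fq, e ((4 * b * s) * t)
        = if s = 0 then (Fintype.card Fq : ℂ) else 0 := by
      intro s
      rw [sum_char_mul he]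
      have hiff : (4 * b * s = 0) ↔ (s = 0) := by
        constructor
        · intro h
          rcases mul_eq_zero.mp h with h' | h'
          · rcases mul_eq_zero.mp h' with h'' | h''
            · exact absurd h'' h4
            · exact absurd h'' hb
          · exact h'
        · intro h; rw [h, mul_zero]
      rw [if_congr hiff rfl rfl]
    simp_rw [hinner]
    simp
  have hnormsq : Complex.normSq G = (Fintype.card Fq : ℝ) := by
    have := hGG
    rw [Complex.mul_conj] at this
    exact_mod_cast this
  rw [Complex.norm_def, hnormsq]

end FF

namespace FF
variable {Fq : Type*} [Field Fq] [Fintype Fq]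

/-! ### Finite quadratic Hankel sums -/

/-- The Hankel quadratic form attached to a coefficient sequence. -/
def Qf (a : ℕ → Fq) {n : ℕ} (c : Fin n → Fq) : Fq :=
  ∑ j : Fin n, ∑ k : Fin n, a ((j : ℕ) + (k : ℕ)) * c j * c k

/-- Normalized Gauss-type sum of the Hankel form. -/
def Uq (e : AddChar Fq ℂ) (n : ℕ) (a : ℕ → Fq) : ℂ :=
  ∑ c : Fin n → Fq, e (Qf a c)

lemma snoc_sum {n : ℕ} (F : (Fin (n + 1) → Fq) → ℂ) :
    ∑ c : Fin (n + 1) → Fq, F c = ∑ t : Fq, ∑ x : Fin n → Fq, F (Fin.snoc x t) := by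
  calc ∑ c : Fin (n + 1) → Fq, F c
      = ∑ p : Fq × (Fin n → Fq), F ((Fin.snocEquiv fun _ => Fq) p) :=
        (Equiv.sum_comp (Fin.snocEquiv fun _ => Fq) F).symm
    _ = ∑ t : Fq, ∑ x : Fin n → Fq, F ((Fin.snocEquiv fun _ => Fq) (t, x)) :=
        Fintype.sum_prod_type _
    _ = ∑ t : Fq, ∑ x : Fin n → Fq, F (Fin.snoc x t) := rfl

lemma cons_sum {n : ℕ} (F : (Fin (n + 1) → Fq) → ℂ) :
    ∑ c : Fin (n + 1) → Fq, F c = ∑ s : Fq, ∑ y : Fin n → Fq, F (Fin.cons s y) := by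
  calc ∑ c : Fin (n + 1) → Fq, F c
      = ∑ p : Fq × (Fin n → Fq), F ((Fin.consEquiv fun _ => Fq) p) :=
        (Equiv.sum_comp (Fin.consEquiv fun _ => Fq) F).symm
    _ = ∑ s : Fq, ∑ y : Fin n → Fq, F ((Fin.consEquiv fun _ => Fq) (s, y)) :=
        Fintype.sum_prod_type _
    _ = ∑ s : Fq, ∑ y : Fin n → Fq, F (Fin.cons s y) := rfl

lemma Qf_snoc (a : ℕ → Fq) {n : ℕ} (x : Fin n → Fq) (t : Fq) :
    Qf a (Fin.snoc x t) = Qf a x + (∑ j : Fin n, a ((j : ℕ) + n) * x j * t)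
      + (∑ k : Fin n, a (n + (k : ℕ)) * t * x k) + a (n + n) * t * t := by
  unfold Qf
  simp only [Fin.sum_univ_castSucc, Fin.snoc_castSucc, Fin.snoc_last, Fin.coe_castSucc,
    Fin.val_last]
  rw [Finset.sum_add_distrib]
  ring

lemma Uq_drop (e : AddChar Fq ℂ) (n : ℕ) (a : ℕ → Fq) (h : ∀ m, n ≤ m → a m = 0) :
    Uq e (n + 1) a = (Fintype.card Fq : ℂ) * Uq e n a := by
  unfold Uq
  rw [snoc_sum]
  have hQ : ∀ (x : Fin n → Fq) (t : Fq), Qf a (Fin.snoc x t) = Qf a x := by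
    intro x t
    rw [Qf_snoc, h (n + n) (by omega)]
    have h1 : ∀ j : Fin n, a ((j : ℕ) + n) = 0 := fun j => h _ (by omega)
    have h2' : ∀ k : Fin n, a (n + (k : ℕ)) = 0 := fun k => h _ (by omega)
    simp [h1, h2']
  simp_rw [hQ]
  rw [Finset.sum_const, Finset.card_univ, nsmul_eq_mul]

lemma Uq_rec {e : AddChar Fq ℂ} (he : e ≠ 1) (h2 : (2 : Fq) ≠ 0) (n : ℕ) (a : ℕ → Fq)
    (h : ∀ m, n + 2 ≤ m → a m = 0) (ha : a (n + 1) ≠ 0) :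
    Uq e (n + 2) a = (Fintype.card Fq : ℂ) * Uq e n (fun m => a (m + 2)) := by
  unfold Uq
  rw [show n + 2 = (n + 1) + 1 from rfl, snoc_sum]
  have hQ : ∀ (x : Fin (n + 1) → Fq) (t : Fq),
      Qf a (Fin.snoc x t) = Qf a x + (2 * a (n + 1) * x 0) * t := by
    intro x t
    rw [Qf_snoc]
    have hc1 : (∑ j : Fin (n + 1), a ((j : ℕ) + (n + 1)) * x j * t) = a (n + 1) * x 0 * t := by
      rw [Fin.sum_univ_succ]
      have hz : ∀ j : Fin n, a ((j : ℕ) + 1 + (n + 1)) = 0 := by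
        intro j; apply h; omega
      simp [hz]
    have hc2 : (∑ k : Fin (n + 1), a ((n + 1) + (k : ℕ)) * t * x k) = a (n + 1) * t * x 0 := by
      rw [Fin.sum_univ_succ]
      have hz : ∀ k : Fin n, a ((n + 1) + ((k : ℕ) + 1)) = 0 := by
        intro k; apply h; omega
      simp [hz]
    rw [hc1, hc2, h ((n + 1) + (n + 1)) (by omega)]
    ring
  simp_rw [hQ]
  rw [Finset.sum_comm]
  have hsum : ∀ x : Fin (n + 1) → Fq,
      (∑ t : Fq, e (Qf a x + (2 * a (n + 1) * x 0) * t))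
        = e (Qf a x) * (if x 0 = 0 then (Fintype.card Fq : ℂ) else 0) := by
    intro x
    simp_rw [AddChar.map_add_eq_mul]
    rw [← Finset.mul_sum, sum_char_mul he]
    have hiff : (2 * a (n + 1) * x 0 = 0) ↔ (x 0 = 0) := by
      constructor
      · intro h0
        rcases mul_eq_zero.mp h0 with h' | h'
        · rcases mul_eq_zero.mp h' with h'' | h''
          · exact absurd h'' h2
          · exact absurd h'' ha
        · exact h'
      · intro h0; rw [h0, mul_zero]
    rw [if_congr hiff rfl rfl]
  simp_rw [hsum]
  rw [cons_sum (fun x => e (Qf a x) * (if x 0 = 0 then (Fintype.card Fq : ℂ) else 0))]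
  simp only [Fin.cons_zero]
  rw [Finset.sum_eq_single (0 : Fq)
    (fun s _ hs => by simp [hs]) (fun h0 => absurd (Finset.mem_univ _) h0)]
  simp only [if_pos rfl]
  have hQ0 : ∀ y : Fin n → Fq, Qf a (Fin.cons (0 : Fq) y) = Qf (fun m => a (m + 2)) y := by
    intro y
    unfold Qf
    rw [Fin.sum_univ_succ]
    simp only [Fin.cons_zero, Fin.cons_succ, mul_zero, zero_mul, Finset.sum_const_zero, zero_add]
    refine Finset.sum_congr rfl fun j _ => ?_
    rw [Fin.sum_univ_succ]
    simp only [Fin.cons_zero, Fin.cons_succ, mul_zero, zero_mul, zero_add]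
    refine Finset.sum_congr rfl fun k _ => ?_
    rw [show ((Fin.succ j : Fin (n + 1)) : ℕ) + ((Fin.succ k : Fin (n + 1)) : ℕ)
        = (j : ℕ) + (k : ℕ) + 2 from by simp [Fin.val_succ]; omega]
  simp_rw [hQ0]
  rw [← Finset.sum_mul, mul_comm]
  norm_num

end FF

namespace FF
variable {Fq : Type*} [Field Fq] [Fintype Fq]

lemma Uq_zero (e : AddChar Fq ℂ) (a : ℕ → Fq) : Uq e 0 a = 1 := by
  rw [Uq]
  have hQ : ∀ c : Fin 0 → Fq, Qf a c = 0 := by intro c; rw [Qf]; simp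
  simp [hQ, AddChar.map_zero_eq_one]

lemma Uq_zero_coeffs (e : AddChar Fq ℂ) (M : ℕ) (a : ℕ → Fq) (h : ∀ m, a m = 0) :
    Uq e M a = (Fintype.card Fq : ℂ) ^ M := by
  induction M with
  | zero => rw [Uq_zero]; norm_num
  | succ n ih =>
      rw [Uq_drop e n a (fun m _ => h m), ih, pow_succ]
      ring

lemma Uq_stab (e : AddChar Fq ℂ) (n : ℕ) (a : ℕ → Fq) (h : ∀ m, n ≤ m → a m = 0) :
    ∀ j : ℕ, Uq e (n + j) a = (Fintype.card Fq : ℂ) ^ j * Uq e n a := by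
  intro j
  induction j with
  | zero => simp
  | succ j ih =>
      rw [show n + (j + 1) = (n + j) + 1 from rfl,
        Uq_drop e (n + j) a (fun m hm => h m (by omega)), ih, pow_succ]
      ring

lemma Uq_even {e : AddChar Fq ℂ} (he : e ≠ 1) (h2 : (2 : Fq) ≠ 0) :
    ∀ (k : ℕ) (a : ℕ → Fq), (∀ m, 2 * k ≤ m → a m = 0) → (k = 0 ∨ a (2 * k - 1) ≠ 0) →
      Uq e (2 * k) a = (Fintype.card Fq : ℂ) ^ k := by
  intro k
  induction k with
  | zero => intro a _ _; simpa using Uq_zero e a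
  | succ k ih =>
      intro a h hne
      have hne' : a (2 * k + 1) ≠ 0 := by
        rcases hne with h0 | hne'
        · exact absurd h0 (by omega)
        · rwa [show 2 * (k + 1) - 1 = 2 * k + 1 from by omega] at hne'
      have hrec := Uq_rec he h2 (2 * k) a (fun m hm => h m (by omega)) hne'
      rw [show 2 * (k + 1) = 2 * k + 2 from by ring, hrec,
        ih (fun m => a (m + 2)) (fun m hm => h (m + 2) (by omega)) ?_, pow_succ]
      · ring
      · rcases Nat.eq_zero_or_pos k with h0 | hk
        · exact Or.inl h0
        · refine Or.inr ?_
          show a (2 * k - 1 + 2) ≠ 0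
          rwa [show 2 * k - 1 + 2 = 2 * k + 1 from by omega]

lemma Uq_odd {e : AddChar Fq ℂ} (he : e ≠ 1) (h2 : (2 : Fq) ≠ 0) :
    ∀ (k : ℕ) (a : ℕ → Fq), (∀ m, 2 * k + 1 ≤ m → a m = 0) → a (2 * k) ≠ 0 →
      Uq e (2 * k + 1) a = (Fintype.card Fq : ℂ) ^ k * ∑ x : Fq, e (a (2 * k) * x * x) := by
  intro k
  induction k with
  | zero =>
      intro a _ _
      rw [Uq]
      have hQ : ∀ c : Fin 1 → Fq, Qf a c = a 0 * c 0 * c 0 := by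
        intro c
        rw [Qf]
        simp [Fin.sum_univ_one]
      simp_rw [hQ]
      rw [← Equiv.sum_comp (Equiv.funUnique (Fin 1) Fq).symm
        (fun c : Fin 1 → Fq => e (a 0 * c 0 * c 0))]
      simp [Equiv.funUnique]
  | succ k ih =>
      intro a h hne
      have hne' : a (2 * k + 1 + 1) ≠ 0 := by
        rwa [show 2 * k + 1 + 1 = 2 * (k + 1) from by ring]
      have hrec := Uq_rec he h2 (2 * k + 1) a (fun m hm => h m (by omega)) hne'
      rw [show 2 * (k + 1) + 1 = 2 * k + 1 + 2 from by ring, hrec,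
        ih (fun m => a (m + 2)) (fun m hm => h (m + 2) (by omega))
          (by show a (2 * k + 2) ≠ 0; rwa [show 2 * k + 2 = 2 * (k + 1) from by ring]),
        pow_succ]
      have hidx : a (2 * k + 2) = a (2 * (k + 1)) := by rw [show 2 * k + 2 = 2 * (k + 1) from by ring]
      rw [hidx]
      ring

/-! ### The one-dimensional integral -/

lemma coeff_mul_single (x : LaurentSeries Fq) (b : ℤ) (r : Fq) (n : ℤ) :
    (x * HahnSeries.single b r).coeff n = x.coeff (n - b) * r := by
  have h := HahnSeries.coeff_mul_single_add (r := r) (x := x) (a := n - b) (b := b)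
  rwa [sub_add_cancel] at h

lemma coeff_one_quad (f : LaurentSeries Fq) {M : ℕ} (c : Fin M → Fq) :
    (f * samp c * samp c).coeff 1 = Qf (fun m => f.coeff (-1 - (m : ℤ))) c := by
  rw [samp, Finset.mul_sum, coeff_finsum, Qf, Finset.sum_comm]
  refine Finset.sum_congr rfl fun k _ => ?_
  rw [coeff_mul_single, Finset.mul_sum, coeff_finsum, Finset.sum_mul]
  refine Finset.sum_congr rfl fun j _ => ?_
  rw [coeff_mul_single,
    show (1 : ℤ) - (((k : ℕ) : ℤ) + 1) - (((j : ℕ) : ℤ) + 1)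
      = -1 - (((j : ℕ) + (k : ℕ) : ℕ) : ℤ) from by push_cast; ring]

lemma oneDim {e : AddChar Fq ℂ} (hq : Odd (Fintype.card Fq)) (he : e ≠ 1)
    (f : LaurentSeries Fq) {M : ℕ} (hM : (tdeg f).toNat ≤ M) :
    ((Fintype.card Fq : ℂ) ^ M)⁻¹ * ∑ c : Fin M → Fq, psi e (f * samp c * samp c)
      = gaussFactor e f := by
  classical
  have h2 : (2 : Fq) ≠ 0 := two_ne_zero_of_odd_card hq
  have hqC : (Fintype.card Fq : ℂ) ≠ 0 := by exact_mod_cast Fintype.card_ne_zero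
  have hq1 : (1 : ℝ) ≤ (Fintype.card Fq : ℝ) := le_of_lt (one_lt_q (Fq := Fq))
  set a : ℕ → Fq := fun m => f.coeff (-1 - (m : ℤ)) with ha
  have hU : (∑ c : Fin M → Fq, psi e (f * samp c * samp c)) = Uq e M a := by
    rw [Uq]
    exact Finset.sum_congr rfl fun c _ => by rw [psi, coeff_one_quad]
  rw [hU]
  by_cases hf0 : f = 0
  · have haz : ∀ m, a m = 0 := by intro m; rw [ha]; simp [hf0]
    rw [Uq_zero_coeffs e M a haz, inv_mul_cancel₀ (pow_ne_zero _ hqC), gaussFactor, if_pos hf0]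
  rcases le_or_gt 0 f.order with hord | hord
  · -- `|f| ≤ 1`, the integral is `1`
    have haz : ∀ m, a m = 0 := fun m =>
      HahnSeries.coeff_eq_zero_of_lt_order (by omega)
    rw [Uq_zero_coeffs e M a haz, inv_mul_cancel₀ (pow_ne_zero _ hqC), gaussFactor, if_neg hf0]
    have htd : tdeg f ≤ 0 := by rw [tdeg]; omega
    by_cases hev : Even (tdeg f)
    · rw [if_pos hev]
      have habs : absv f ≤ 1 := by
        rw [absv, if_neg hf0]
        have hmono := (zpow_right_strictMono₀ (one_lt_q (Fq := Fq))).monotone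
          (show -f.order ≤ 0 by omega)
        simpa using hmono
      have h0 : 0 < absv f := by
        rw [absv, if_neg hf0]
        positivity
      have hs0 : 0 < Real.sqrt (absv f) := Real.sqrt_pos.mpr h0
      have hsle : Real.sqrt (absv f) ≤ 1 := by
        rw [show (1 : ℝ) = Real.sqrt 1 from Real.sqrt_one.symm]
        exact Real.sqrt_le_sqrt habs
      have hsq : 1 ≤ (Real.sqrt (absv f))⁻¹ := (one_le_inv₀ hs0).mpr hsle
      rw [min_eq_right hsq]
      norm_num
    · rw [if_neg hev, if_neg (by omega : ¬ (1 ≤ tdeg f))]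
  · -- `|f| ≥ q`
    set n : ℕ := (-f.order).toNat with hn
    have hordn : f.order = -(n : ℤ) := by rw [hn]; omega
    have hn1 : 1 ≤ n := by omega
    have htdeg : tdeg f = (n : ℤ) := by rw [tdeg]; omega
    have hMn : n ≤ M := by
      rw [htdeg] at hM
      simpa using hM
    have hvan : ∀ m, n ≤ m → a m = 0 := by
      intro m hm
      apply HahnSeries.coeff_eq_zero_of_lt_order
      rw [hordn]; omega
    have hlead : a (n - 1) ≠ 0 := by
      show f.coeff (-1 - ((n - 1 : ℕ) : ℤ)) ≠ 0
      rw [show (-1 - ((n - 1 : ℕ) : ℤ)) = f.order from by rw [hordn]; push_cast [Nat.cast_sub hn1]; ring]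
      exact (HahnSeries.coeff_order_eq_zero.not.mpr hf0)
    have hstab : Uq e M a = (Fintype.card Fq : ℂ) ^ (M - n) * Uq e n a := by
      have h := Uq_stab e n a hvan (M - n)
      rwa [Nat.add_sub_cancel' hMn] at h
    have habsv : absv f = (Fintype.card Fq : ℝ) ^ (n : ℕ) := by
      rw [absv, if_neg hf0, hordn, neg_neg, zpow_natCast]
    rcases Nat.even_or_odd n with hev | hodd
    · -- even case
      obtain ⟨k, hk⟩ := hev
      have hk' : n = 2 * k := by omega
      have hk1 : 1 ≤ k := by omega
      have hUn : Uq e n a = (Fintype.card Fq : ℂ) ^ k := by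
        rw [hk']
        exact Uq_even he h2 k a (fun m hm => hvan m (by omega))
          (Or.inr (by rw [show 2 * k - 1 = n - 1 from by omega]; exact hlead))
      rw [hstab, hUn]
      have hval : ((Fintype.card Fq : ℂ) ^ M)⁻¹
          * ((Fintype.card Fq : ℂ) ^ (M - n) * (Fintype.card Fq : ℂ) ^ k)
          = ((Fintype.card Fq : ℂ) ^ k)⁻¹ := by
        have hsplit : (Fintype.card Fq : ℂ) ^ (M - n) * (Fintype.card Fq : ℂ) ^ k
            * (Fintype.card Fq : ℂ) ^ k = (Fintype.card Fq : ℂ) ^ M := by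
          rw [← pow_add, ← pow_add]
          congr 1
          omega
        rw [← hsplit]
        field_simp
      rw [hval, gaussFactor, if_neg hf0,
        if_pos (by rw [htdeg]; exact ⟨(k : ℤ), by push_cast; omega⟩)]
      have hsqrt : Real.sqrt (absv f) = (Fintype.card Fq : ℝ) ^ k := by
        rw [habsv, hk', show (Fintype.card Fq : ℝ) ^ (2 * k) = ((Fintype.card Fq : ℝ) ^ k) ^ 2
          from by rw [← pow_mul]; ring_nf]
        exact Real.sqrt_sq (by positivity)
      have hmin : min ((Real.sqrt (absv f))⁻¹) 1 = ((Fintype.card Fq : ℝ) ^ k)⁻¹ := by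
        rw [hsqrt]
        apply min_eq_left
        have h1 : (1 : ℝ) ≤ (Fintype.card Fq : ℝ) ^ k := one_le_pow₀ hq1
        exact inv_le_one_of_one_le₀ h1
      rw [hmin]
      push_cast
      ring
    · -- odd case
      obtain ⟨k, hk⟩ := hodd
      have hk' : n = 2 * k + 1 := hk
      have hUn : Uq e n a
          = (Fintype.card Fq : ℂ) ^ k * ∑ x : Fq, e (a (2 * k) * x * x) := by
        rw [hk']
        exact Uq_odd he h2 k a (fun m hm => hvan m (by omega))
          (by rw [show 2 * k = n - 1 from by omega]; exact hlead)
      have hcoeff : a (2 * k) = f.coeff f.order := by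
        show f.coeff (-1 - ((2 * k : ℕ) : ℤ)) = f.coeff f.order
        rw [hordn]
        congr 1
        push_cast
        omega
      have hGrw : gaussSumTop e f = ∑ x : Fq, e (a (2 * k) * x * x) := by
        rw [gaussSumTop]
        refine Finset.sum_congr rfl fun x _ => ?_
        rw [hcoeff]
        congr 1
        rw [pow_two]
        ring
      have habsG : ‖gaussSumTop e f‖ = Real.sqrt (Fintype.card Fq) := by
        rw [hGrw]
        exact gauss_abs he h2 (hcoeff ▸ (HahnSeries.coeff_order_eq_zero.not.mpr hf0))
      rw [hstab, hUn, ← hGrw]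
      have hval : ((Fintype.card Fq : ℂ) ^ M)⁻¹
          * ((Fintype.card Fq : ℂ) ^ (M - n)
            * ((Fintype.card Fq : ℂ) ^ k * gaussSumTop e f))
          = ((Fintype.card Fq : ℂ) ^ (k + 1))⁻¹ * gaussSumTop e f := by
        have hsplit : (Fintype.card Fq : ℂ) ^ (M - n) * (Fintype.card Fq : ℂ) ^ k
            * (Fintype.card Fq : ℂ) ^ (k + 1) = (Fintype.card Fq : ℂ) ^ M := by
          rw [← pow_add, ← pow_add]
          congr 1
          omega
        rw [← hsplit]
        field_simp
      rw [hval, gaussFactor, if_neg hf0, if_neg (by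
          rw [htdeg, hk']
          intro hcon
          rcases hcon with ⟨r, hr⟩
          omega),
        if_pos (by rw [htdeg]; exact_mod_cast Nat.one_le_cast.mpr hn1), habsG]
      have hs : Real.sqrt (absv f) * Real.sqrt (Fintype.card Fq)
          = (Fintype.card Fq : ℝ) ^ (k + 1) := by
        rw [habsv, ← Real.sqrt_mul (by positivity),
          show (Fintype.card Fq : ℝ) ^ (n : ℕ) * (Fintype.card Fq : ℝ)
            = ((Fintype.card Fq : ℝ) ^ (k + 1)) ^ 2 from by rw [hk']; ring]
        exact Real.sqrt_sq (by positivity)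
      rw [div_eq_mul_inv]
      have hcast : ((Real.sqrt (absv f) : ℝ) : ℂ) * ((Real.sqrt (Fintype.card Fq) : ℝ) : ℂ)
          = (Fintype.card Fq : ℂ) ^ (k + 1) := by
        rw [← Complex.ofReal_mul, hs]
        push_cast
        ring
      rw [Complex.ofReal_inv,
        show ((Real.sqrt (absv f) : ℝ) : ℂ)⁻¹
            * (gaussSumTop e f * (((Real.sqrt (Fintype.card Fq) : ℝ)) : ℂ)⁻¹)
          = (((Real.sqrt (absv f) : ℝ) : ℂ) * ((Real.sqrt (Fintype.card Fq) : ℝ) : ℂ))⁻¹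
            * gaussSumTop e f from by rw [mul_inv]; ring,
        hcast]

end FF

namespace FF
variable {Fq : Type*} [Field Fq] [Fintype Fq]

lemma og_dotProduct_mulVec {d : ℕ} {A : Matrix (Fin d) (Fin d) (LaurentSeries Fq)} {r₀ : ℤ}
    (hA : ∀ i j, Og r₀ (A i j)) {kx ky : ℤ} {x y : Fin d → LaurentSeries Fq}
    (hx : ∀ i, Og kx (x i)) (hy : ∀ i, Og ky (y i)) :
    Og (kx + r₀ + ky) (dotProduct x (A.mulVec y)) := by
  show Og (kx + r₀ + ky) (∑ i, x i * (A.mulVec y) i)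
  refine og_sum fun i _ => ?_
  have h1 : Og (r₀ + ky) ((A.mulVec y) i) := by
    show Og (r₀ + ky) (∑ j, A i j * y j)
    exact og_sum fun j _ => og_mul (hA i j) (hy j)
  exact og_mono (by omega) (og_mul (hx i) h1)

lemma quad_coeff_congr {d : ℕ} {A : Matrix (Fin d) (Fin d) (LaurentSeries Fq)} {r₀ : ℤ}
    (hA : ∀ i j, Og r₀ (A i j)) {m : ℤ} (hm1 : 1 ≤ m) (hm : 2 ≤ 1 + r₀ + m)
    {x y : Fin d → LaurentSeries Fq} (hx : ∀ i, Og 1 (x i)) (hy : ∀ i, Og 1 (y i))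
    (hdxy : ∀ i, Og m (x i - y i)) :
    (dotProduct x (A.mulVec x)).coeff 1 = (dotProduct y (A.mulVec y)).coeff 1 := by
  have hexp : dotProduct x (A.mulVec x) - dotProduct y (A.mulVec y)
      = dotProduct (x - y) (A.mulVec x) + dotProduct y (A.mulVec (x - y)) := by
    rw [sub_dotProduct, Matrix.mulVec_sub, dotProduct_sub]
    ring
  have hd2 : Og 2 (dotProduct x (A.mulVec x) - dotProduct y (A.mulVec y)) := by
    rw [hexp]
    exact og_add (og_mono (by omega) (og_dotProduct_mulVec hA hdxy hx))
      (og_mono (by omega) (og_dotProduct_mulVec hA hy hdxy))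
  have h := hd2 1 (by norm_num)
  rw [HahnSeries.coeff_sub] at h
  exact sub_eq_zero.mp h

end FF

set_option maxHeartbeats 2000000 in
open FF Filter in
/-- multi-dimensional Gaussian integral.  Let `q` be odd and `A` a
symmetric `d × d` matrix over `K_∞`.  Then the Gaussian integral `∫_{𝕋^d} ψ(uᵀAu) du`
(computed as the limit of the Riemann sums `cubeSum`) equals `Π_i 𝒢(λ_i)`, where
`λ_1, …, λ_d` are the diagonal entries of `γᵀAγ` for any `γ ∈ GL_d(O_∞)` diagonalizing
`A`. -/
theorem gaussian_integral_matrix {Fq : Type*} [Field Fq] [Fintype Fq]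
    (hq : Odd (Fintype.card Fq)) (e : AddChar Fq ℂ) (he : e ≠ 1) {d : ℕ}
    (A : Matrix (Fin d) (Fin d) (LaurentSeries Fq)) (hA : A.IsSymm)
    (γ : Matrix (Fin d) (Fin d) (LaurentSeries Fq))
    (hγO : ∀ i j, absv (γ i j) ≤ 1) (hγdet : absv γ.det = 1)
    (hdiag : (γ.transpose * A * γ).IsDiag) :
    Tendsto (fun M : ℕ =>
        cubeSum d M (fun u => psi e (dotProduct u (A.mulVec u)))) atTop
      (nhds (∏ i, gaussFactor e ((γ.transpose * A * γ) i i))) := by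
  classical
  have h2 : (2 : Fq) ≠ 0 := two_ne_zero_of_odd_card hq
  have hqC : (Fintype.card Fq : ℂ) ≠ 0 := by exact_mod_cast Fintype.card_ne_zero
  set D := γ.transpose * A * γ with hDdef
  obtain ⟨r₁, hr₁⟩ : ∃ r : ℤ, ∀ i j, r ≤ (A i j).order := by
    obtain ⟨r, hr⟩ := (Set.finite_range fun p : Fin d × Fin d => (A p.1 p.2).order).bddBelow
    exact ⟨r, fun i j => hr ⟨(i, j), rfl⟩⟩
  set r₀ : ℤ := min r₁ 0 with hr₀def
  have hr₀le : r₀ ≤ 0 := min_le_right _ _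
  have hA' : ∀ i j, Og r₀ (A i j) := fun i j =>
    og_of_order_le (le_trans (min_le_left _ _) (hr₁ i j))
  have hγo : ∀ i j, Og 0 (γ i j) := fun i j => og_of_absv_le_one (hγO i j)
  obtain ⟨hdet0, hdetord⟩ := absv_eq_one_order hγdet
  have hadj : ∀ i j, Og 0 (γ.adjugate i j) := og_adjugate γ hγo
  have hdetinv : Og 0 (γ.det⁻¹) := by
    have hinv0 : γ.det⁻¹ ≠ 0 := inv_ne_zero hdet0
    have horder : (γ.det * γ.det⁻¹).order = 0 := by
      rw [mul_inv_cancel₀ hdet0]; exact HahnSeries.order_one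
    rw [HahnSeries.order_mul hdet0 hinv0, hdetord, zero_add] at horder
    exact og_of_order_le (le_of_eq horder.symm)
  set M₀ : ℕ := max (-r₀).toNat (Finset.univ.sup fun i : Fin d => (tdeg (D i i)).toNat) with hM₀
  refine Filter.Tendsto.congr' ?_ tendsto_const_nhds
  rw [Filter.EventuallyEq, Filter.eventually_atTop]
  refine ⟨M₀, fun M hM => ?_⟩
  have hMr : -r₀ ≤ (M : ℤ) := by
    have h := le_trans (le_max_left _ _) hM
    omega
  have hogmul : ∀ (w : Fin d → LaurentSeries Fq), (∀ i, Og 1 (w i)) →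
      ∀ i, Og 1 ((γ.mulVec w) i) := by
    intro w hw i
    show Og 1 (∑ j, γ i j * w j)
    exact og_sum fun j _ => og_mono (by omega) (og_mul (hγo i j) (hw j))
  -- the change-of-variables bijection on sample points
  set g : (Fin d → Fin M → Fq) → (Fin d → Fin M → Fq) :=
    fun c i j => ((γ.mulVec fun i' => samp (c i')) i).coeff (((j : ℕ) : ℤ) + 1) with hg
  have hginj : Function.Injective g := by
    intro c c' hcc
    set w : Fin d → LaurentSeries Fq := fun i => samp (c i) - samp (c' i) with hw
    have hwog : ∀ i, Og 1 (w i) := fun i => og_sub (og_one_samp _) (og_one_samp _)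
    have hvw : ∀ i, Og ((M : ℤ) + 1) ((γ.mulVec w) i) := by
      intro i n hn
      have hsplit : (γ.mulVec w) i = ((γ.mulVec fun i' => samp (c i')) i)
          - ((γ.mulVec fun i' => samp (c' i')) i) := by
        rw [show w = (fun i' => samp (c i')) - (fun i' => samp (c' i')) from rfl,
          Matrix.mulVec_sub]
        rfl
      rcases lt_or_ge n 1 with h1 | h1
      · exact hogmul w hwog i n h1
      · have hnM : n ≤ (M : ℤ) := by omega
        set jn : Fin M := ⟨(n - 1).toNat, by omega⟩ with hjn
        have hn' : ((jn : ℕ) : ℤ) + 1 = n := by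
          rw [hjn]
          simp
          omega
        have h3 : ((γ.mulVec fun i' => samp (c i')) i).coeff (((jn : ℕ) : ℤ) + 1)
            = ((γ.mulVec fun i' => samp (c' i')) i).coeff (((jn : ℕ) : ℤ) + 1) :=
          congrFun (congrFun hcc i) jn
        rw [hsplit, HahnSeries.coeff_sub, ← hn', h3, sub_self]
    have hdetw : ∀ i, Og ((M : ℤ) + 1) (γ.det * w i) := by
      intro i
      have hmm : (γ.adjugate.mulVec (γ.mulVec w)) i = γ.det * w i := by
        rw [Matrix.mulVec_mulVec, Matrix.adjugate_mul]
        show (∑ j, (γ.det • (1 : Matrix (Fin d) (Fin d) (LaurentSeries Fq))) i j * w j) = _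
        rw [Finset.sum_eq_single i (fun j _ hji => ?_) (fun h => absurd (Finset.mem_univ _) h)]
        · rw [Matrix.smul_apply, Matrix.one_apply_eq, smul_eq_mul, mul_one]
        · rw [Matrix.smul_apply, Matrix.one_apply_ne (Ne.symm hji), smul_zero, zero_mul]
      have h4 : Og ((M : ℤ) + 1) ((γ.adjugate.mulVec (γ.mulVec w)) i) := by
        show Og ((M : ℤ) + 1) (∑ j, γ.adjugate i j * (γ.mulVec w) j)
        exact og_sum fun j _ => og_mono (by omega) (og_mul (hadj i j) (hvw j))
      rw [hmm] at h4
      exact h4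
    have hwM : ∀ i, Og ((M : ℤ) + 1) (w i) := by
      intro i
      have heq : w i = γ.det⁻¹ * (γ.det * w i) := (inv_mul_cancel_left₀ hdet0 _).symm
      rw [heq]
      exact og_mono (by omega) (og_mul hdetinv (hdetw i))
    have hwz : ∀ i, samp (c i) - samp (c' i) = 0 := by
      intro i
      have hwi : w i = samp (c i) - samp (c' i) := rfl
      rw [← hwi]
      ext n
      rw [HahnSeries.coeff_zero]
      rcases le_or_gt ((M : ℤ) + 1) n with hn | hn
      · rw [hwi, HahnSeries.coeff_sub, samp_coeff_out _ (Or.inr (by omega)),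
          samp_coeff_out _ (Or.inr (by omega)), sub_self]
      · exact hwM i n hn
    funext i
    exact samp_inj (sub_eq_zero.mp (hwz i))
  have hgbij : Function.Bijective g := Finite.injective_iff_bijective.mp hginj
  -- the summand after the change of variables
  have hterm : ∀ c : Fin d → Fin M → Fq,
      psi e (dotProduct (fun i => samp (g c i)) (A.mulVec fun i => samp (g c i)))
        = ∏ i, psi e (D i i * samp (c i) * samp (c i)) := by
    intro c
    set u : Fin d → LaurentSeries Fq := fun i => samp (c i) with hu
    set v := γ.mulVec u with hv
    have hvog : ∀ i, Og 1 (v i) := hogmul u fun i => og_one_samp _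
    have hstep1 : (dotProduct (fun i => samp (g c i))
          (A.mulVec fun i => samp (g c i))).coeff 1
        = (dotProduct v (A.mulVec v)).coeff 1 := by
      refine quad_coeff_congr hA' (m := (M : ℤ) + 1) (by omega) (by omega)
        (fun i => og_one_samp _) hvog ?_
      intro i n hn
      rw [HahnSeries.coeff_sub]
      rcases lt_or_ge n 1 with h1 | h1
      · rw [samp_coeff_out _ (Or.inl h1), hvog i n h1, sub_self]
      · set jn : Fin M := ⟨(n - 1).toNat, by omega⟩ with hjn
        have hn' : ((jn : ℕ) : ℤ) + 1 = n := by
          rw [hjn]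
          simp
          omega
        have hgc : (samp (g c i)).coeff (((jn : ℕ) : ℤ) + 1) = (v i).coeff (((jn : ℕ) : ℤ) + 1) :=
          samp_coeff (g c i) jn
        rw [← hn', hgc, sub_self]
    have hstep2 : dotProduct u (D.mulVec u) = dotProduct v (A.mulVec v) := by
      rw [hDdef, hv]
      calc dotProduct u ((γ.transpose * A * γ).mulVec u)
          = dotProduct u (γ.transpose.mulVec ((A * γ).mulVec u)) := by
            rw [Matrix.mulVec_mulVec, ← Matrix.mul_assoc]
        _ = dotProduct (Matrix.vecMul u γ.transpose) ((A * γ).mulVec u) := by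
            rw [Matrix.dotProduct_mulVec]
        _ = dotProduct (γ.mulVec u) ((A * γ).mulVec u) := by
            rw [Matrix.vecMul_transpose]
        _ = dotProduct (γ.mulVec u) (A.mulVec (γ.mulVec u)) := by
            rw [Matrix.mulVec_mulVec]
    have hquad : dotProduct u (D.mulVec u)
        = ∑ i, D i i * samp (c i) * samp (c i) := by
      show (∑ i, u i * (D.mulVec u) i) = _
      refine Finset.sum_congr rfl fun i _ => ?_
      have hrow : (D.mulVec u) i = D i i * u i := by
        show (∑ j, D i j * u j) = D i i * u i
        refine Finset.sum_eq_single i (fun j _ hji => ?_) (fun h => absurd (Finset.mem_univ _) h)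
        rw [hdiag (Ne.symm hji), zero_mul]
      rw [hrow, hu]
      ring
    calc psi e (dotProduct (fun i => samp (g c i)) (A.mulVec fun i => samp (g c i)))
        = e ((dotProduct (fun i => samp (g c i))
            (A.mulVec fun i => samp (g c i))).coeff 1) := rfl
      _ = e ((dotProduct v (A.mulVec v)).coeff 1) := by rw [hstep1]
      _ = psi e (dotProduct v (A.mulVec v)) := rfl
      _ = psi e (dotProduct u (D.mulVec u)) := by rw [← hstep2]
      _ = psi e (∑ i, D i i * samp (c i) * samp (c i)) := by rw [hquad]
      _ = ∏ i, psi e (D i i * samp (c i) * samp (c i)) := psi_sum e _ _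
  -- assemble
  show (∏ i, gaussFactor e (D i i))
      = ((Fintype.card Fq : ℂ) ^ (d * M))⁻¹ * ∑ c : Fin d → Fin M → Fq,
          psi e (dotProduct (fun i => samp (c i)) (A.mulVec fun i => samp (c i)))
  have hchange : (∑ c : Fin d → Fin M → Fq,
        psi e (dotProduct (fun i => samp (c i)) (A.mulVec fun i => samp (c i))))
      = ∑ c : Fin d → Fin M → Fq, ∏ i, psi e (D i i * samp (c i) * samp (c i)) := by
    rw [← Function.Bijective.sum_comp hgbij (fun c : Fin d → Fin M → Fq =>
      psi e (dotProduct (fun i => samp (c i)) (A.mulVec fun i => samp (c i))))]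
    exact Finset.sum_congr rfl fun c _ => hterm c
  rw [hchange,
    ← Fintype.prod_sum fun (i : Fin d) (b : Fin M → Fq) => psi e (D i i * samp b * samp b)]
  have hpow : ((Fintype.card Fq : ℂ) ^ (d * M))⁻¹
      = ∏ _i : Fin d, ((Fintype.card Fq : ℂ) ^ M)⁻¹ := by
    rw [Finset.prod_const, Finset.card_univ, Fintype.card_fin, inv_pow, ← pow_mul,
      Nat.mul_comm M d]
  rw [hpow, ← Finset.prod_mul_distrib]
  refine Finset.prod_congr rfl fun i _ => ?_
  have hsup : (tdeg (D i i)).toNat ≤ M₀ :=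
    le_trans (Finset.le_sup (f := fun i : Fin d => (tdeg (D i i)).toNat) (Finset.mem_univ i))
      (le_max_right _ _)
  exact (oneDim hq he (D i i) (le_trans hsup hM)).symm
end
end

section
/- Let F(x) = x^T A x be a quadratic form over F_q[t], g, k ∈ F_q[t], λ ∈ F_q[t]^d, and define S_{g,r}(a,ℓ,c) = Σ_{b ∈ (F_q[t]/(gr))^d} ψ( ((a+rℓ)(2λ^T A b − k) + ag F(b) − ⟨c,b⟩)/(gr) ). Then S_{g,r}(a,ℓ,c) = 0 unless c ≡ 2(a+rℓ) A λ (mod g). Consequently the full sum S_{g,r}(c) = Σ_{|ℓ|<|g|} Σ*_{|a|<|r|} S_{g,r}(a,ℓ,c) vanishes unless c ≡ α A λ (mod g) for some α ∈ F_q[t]. -/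
/-!
Common setup: `K_∞ = 𝔽_q((1/t))` is modeled as `LaurentSeries Fq` in the variable `X = 1/t`,
so that an element `Σ_{i ≤ N} a_i t^i` of `K_∞` corresponds to the Hahn series
`Σ_{n ≥ -N} a_{-n} X^n`.  The degree in `t` is the negative of the Hahn-series order,
the absolute value is `|α| = q^{deg_t α}`, and the standard additive character is
`ψ(α) = e_q(coefficient of t^{-1}) = e_q(coefficient of X^1)`.
-/

open scoped BigOperators Classical
noncomputable section



namespace FF
variable {Fq : Type*} [Field Fq] [Fintype Fq]

/-- The exponential sum
`S_{g,r}(a,ℓ,c) = Σ_{b mod gr} ψ(((a+rℓ)(2λᵀAb − k) + agF(b) − ⟨c,b⟩)/(gr))`,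
with residues `b` modulo `gr` enumerated coordinatewise by coefficient tuples. -/
def Sterm {d : ℕ} (e : AddChar Fq ℂ) (A : Matrix (Fin d) (Fin d) (Polynomial Fq))
    (g r k : Polynomial Fq) (lam : Fin d → Polynomial Fq)
    (a ℓ : Polynomial Fq) (c : Fin d → Polynomial Fq) : ℂ :=
  ∑ b : Fin d → Fin (g * r).natDegree → Fq,
    psi e (toK ((a + r * ℓ) * (2 * (∑ i, ∑ j, lam i * A i j * polyOf (b j)) - k) +
        a * g * (∑ i, ∑ j, polyOf (b i) * A i j * polyOf (b j)) -
        ∑ i, c i * polyOf (b i)) / toK (g * r))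

/-- The full exponential sum `S_{g,r}(c) = Σ_{|ℓ|<|g|} Σ*_{|a|<|r|} S_{g,r}(a,ℓ,c)`. -/
def Sfull {d : ℕ} (e : AddChar Fq ℂ) (A : Matrix (Fin d) (Fin d) (Polynomial Fq))
    (g r k : Polynomial Fq) (lam : Fin d → Polynomial Fq)
    (c : Fin d → Polynomial Fq) : ℂ :=
  ∑ ℓ : Fin g.natDegree → Fq, ∑ a : Fin r.natDegree → Fq,
    if IsCoprime (polyOf a) r then Sterm e A g r k lam (polyOf a) (polyOf ℓ) c else 0

end FF

namespace FF
variable {Fq : Type*} [Field Fq] [Fintype Fq]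

lemma polyOf_coeff {N : ℕ} (c : Fin N → Fq) (j : ℕ) :
    (polyOf c).coeff j = if h : j < N then c ⟨j, h⟩ else 0 := by
  classical
  simp only [polyOf, Polynomial.finset_sum_coeff, Polynomial.coeff_C_mul,
    Polynomial.coeff_X_pow]
  by_cases h : j < N
  · rw [dif_pos h, Finset.sum_eq_single (⟨j, h⟩ : Fin N)]
    · simp
    · rintro b - hb
      have hbj : j ≠ (b : ℕ) := by
        intro hj; exact hb (by ext; exact hj.symm)
      simp [hbj]
    · intro hmem; exact absurd (Finset.mem_univ _) hmem
  · rw [dif_neg h]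
    apply Finset.sum_eq_zero
    rintro b -
    have hbj : j ≠ (b : ℕ) := by omega
    simp [hbj]

lemma polyOf_injective {N : ℕ} : Function.Injective (polyOf : (Fin N → Fq) → Polynomial Fq) := by
  intro x y h
  funext i
  have := congrArg (fun p => Polynomial.coeff p i) h
  simpa [polyOf_coeff] using this

lemma polyOf_add {N : ℕ} (c c' : Fin N → Fq) : polyOf (c + c') = polyOf c + polyOf c' := by
  simp [polyOf, Pi.add_apply, map_add, add_mul, Finset.sum_add_distrib]

lemma polyOf_zero {N : ℕ} : polyOf (0 : Fin N → Fq) = 0 := by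
  simp [polyOf]

lemma polyOf_degree_lt {N : ℕ} (c : Fin N → Fq) : (polyOf c).degree < (N : ℕ) := by
  apply lt_of_le_of_lt (Polynomial.degree_sum_le _ _)
  rw [Finset.sup_lt_iff (by exact_mod_cast WithBot.bot_lt_coe N)]
  rintro i -
  refine lt_of_le_of_lt (Polynomial.degree_C_mul_X_pow_le _ _) ?_
  exact_mod_cast i.isLt

/-- Coefficient tuple of a polynomial. -/
def toT (N : ℕ) (p : Polynomial Fq) : Fin N → Fq := fun i => p.coeff i

lemma polyOf_toT {N : ℕ} {p : Polynomial Fq} (h : p.degree < (N : ℕ)) :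
    polyOf (toT N p) = p := by
  ext j
  rw [polyOf_coeff]
  by_cases hj : j < N
  · simp [toT, hj]
  · rw [dif_neg hj]
    symm
    apply Polynomial.coeff_eq_zero_of_degree_lt
    refine lt_of_lt_of_le h ?_
    exact_mod_cast Nat.le_of_not_lt hj

lemma toK_add (p q : Polynomial Fq) : toK (p + q) = toK p + toK q :=
  Polynomial.eval₂_add _ _

lemma toK_mul (p q : Polynomial Fq) : toK (p * q) = toK p * toK q :=
  Polynomial.eval₂_mul _ _

lemma toK_zero : toK (0 : Polynomial Fq) = 0 :=
  Polynomial.eval₂_zero _ _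

lemma toK_coeff (p : Polynomial Fq) (n : ℤ) :
    (toK p).coeff n = if 0 ≤ -n then p.coeff (-n).toNat else 0 := by
  classical
  rw [toK, Polynomial.eval₂_eq_sum_range]
  have ht : ∀ i : ℕ, (HahnSeries.C (p.coeff i) * tK ^ i : LaurentSeries Fq)
      = HahnSeries.single (-(i : ℤ)) (p.coeff i) := by
    intro i
    rw [tK, HahnSeries.single_pow, HahnSeries.C_apply, HahnSeries.single_mul_single]
    congr 1
    · simp [smul_eq_mul]
    · simp
  simp only [ht]
  rw [show (∑ x ∈ Finset.range (p.natDegree + 1),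
        (HahnSeries.single (-(x : ℤ))) (p.coeff x)).coeff n
      = ∑ x ∈ Finset.range (p.natDegree + 1),
          ((HahnSeries.single (-(x : ℤ))) (p.coeff x) : LaurentSeries Fq).coeff n
    from map_sum (HahnSeries.coeff.addMonoidHom n) _ _]
  simp only [HahnSeries.coeff_single]
  by_cases hn : 0 ≤ -n
  · rw [if_pos hn]
    by_cases hm : (-n).toNat ≤ p.natDegree
    · rw [Finset.sum_eq_single ((-n).toNat)]
      · rw [if_pos (by omega)]
      · rintro i - hi
        rw [if_neg (by omega)]
      · intro hmem
        exact absurd (Finset.mem_range.mpr (by omega)) hmem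
    · rw [Finset.sum_eq_zero, Polynomial.coeff_eq_zero_of_natDegree_lt (by omega)]
      intro i hi
      rw [Finset.mem_range] at hi
      rw [if_neg (by omega)]
  · rw [if_neg hn, Finset.sum_eq_zero]
    intro i hi
    rw [if_neg (by omega)]

lemma toK_coeff_pos (p : Polynomial Fq) {n : ℤ} (hn : 0 < n) : (toK p).coeff n = 0 := by
  rw [toK_coeff, if_neg (by omega)]

lemma toK_coeff_natDegree (p : Polynomial Fq) :
    (toK p).coeff (-(p.natDegree : ℤ)) = p.leadingCoeff := by
  rw [toK_coeff, if_pos (by omega), Polynomial.leadingCoeff]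
  congr 1
  omega

lemma toK_ne_zero {p : Polynomial Fq} (hp : p ≠ 0) : toK p ≠ 0 := by
  intro h
  have := toK_coeff_natDegree p
  rw [h] at this
  simp only [HahnSeries.coeff_zero] at this
  exact Polynomial.leadingCoeff_ne_zero.mpr hp this.symm

lemma toK_order {p : Polynomial Fq} (hp : p ≠ 0) :
    (toK p).order = -(p.natDegree : ℤ) := by
  apply le_antisymm
  · apply HahnSeries.order_le_of_coeff_ne_zero
    rw [toK_coeff_natDegree]
    exact Polynomial.leadingCoeff_ne_zero.mpr hp
  · by_contra hlt
    push_neg at hlt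
    have h2 : (toK p).coeff (toK p).order ≠ 0 := mt HahnSeries.coeff_order_eq_zero.mp (toK_ne_zero hp)
    apply h2
    rw [toK_coeff]
    by_cases h3 : 0 ≤ -(toK p).order
    · rw [if_pos h3]
      apply Polynomial.coeff_eq_zero_of_natDegree_lt
      omega
    · rw [if_neg h3]

lemma toK_leadingCoeff {p : Polynomial Fq} (hp : p ≠ 0) :
    (toK p).leadingCoeff = p.leadingCoeff := by
  have h1 : (toK p).leadingCoeff = (toK p).coeff (toK p).order := by
    rw [HahnSeries.leadingCoeff_eq]
  rw [h1, toK_order hp, toK_coeff_natDegree]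

/-- The residue coefficient of `p/g` when `deg p = deg g - 1`. -/
lemma coeff_one_div {p g : Polynomial Fq} (hp : p ≠ 0) (hg : g ≠ 0)
    (hd : p.natDegree + 1 = g.natDegree) :
    ((toK p / toK g : LaurentSeries Fq)).coeff 1 = p.leadingCoeff * (g.leadingCoeff)⁻¹ := by
  have hg' : (toK g : LaurentSeries Fq) ≠ 0 := toK_ne_zero hg
  have hp' : (toK p : LaurentSeries Fq) ≠ 0 := toK_ne_zero hp
  set h : LaurentSeries Fq := toK p / toK g with hh
  have hmul : toK g * h = toK p := by
    rw [hh, mul_div_cancel₀ _ hg']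
  have hne : h ≠ 0 := by
    intro h0; rw [h0, mul_zero] at hmul; exact hp' hmul.symm
  have horder : h.order = 1 := by
    have h5 := HahnSeries.order_mul hg' hne
    rw [hmul, toK_order hp, toK_order hg] at h5
    omega
  have hcoeff := HahnSeries.coeff_mul_order_add_order (toK g) h
  rw [hmul, toK_order hg, horder, toK_leadingCoeff hg] at hcoeff
  have hlead : h.leadingCoeff = h.coeff 1 := by
    rw [HahnSeries.leadingCoeff_eq, horder]
  have hL : (toK p).coeff (-(g.natDegree : ℤ) + 1) = p.leadingCoeff := by
    have h6 : (-(g.natDegree : ℤ) + 1) = -(p.natDegree : ℤ) := by omega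
    rw [h6, toK_coeff_natDegree]
  rw [hL, hlead] at hcoeff
  have hgl : g.leadingCoeff ≠ 0 := Polynomial.leadingCoeff_ne_zero.mpr hg
  rw [hcoeff, mul_comm g.leadingCoeff, mul_assoc, mul_inv_cancel₀ hgl, mul_one]

/-- The character `x ↦ ψ(x/D)` on `𝔽_q[t]`. -/
def chiD (e : AddChar Fq ℂ) (D : Polynomial Fq) : AddChar (Polynomial Fq) ℂ where
  toFun x := e ((toK x / toK D : LaurentSeries Fq).coeff 1)
  map_zero_eq_one' := by
    simp only [toK_zero, zero_div, HahnSeries.coeff_zero]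
    exact e.map_zero_eq_one
  map_add_eq_mul' x y := by
    simp only [toK_add, add_div, HahnSeries.coeff_add, e.map_add_eq_mul]

lemma chiD_apply (e : AddChar Fq ℂ) (D x : Polynomial Fq) :
    chiD e D x = psi e (toK x / toK D) := rfl

lemma chiD_mul_denom (e : AddChar Fq ℂ) {D : Polynomial Fq} (hD : D ≠ 0) (x : Polynomial Fq) :
    chiD e D (D * x) = 1 := by
  show e ((toK (D * x) / toK D : LaurentSeries Fq).coeff 1) = 1
  rw [toK_mul, mul_div_cancel_left₀ _ (toK_ne_zero hD), toK_coeff_pos _ one_pos]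
  exact e.map_zero_eq_one

lemma chiD_shift (e : AddChar Fq ℂ) {g r : Polynomial Fq} (hr : r ≠ 0) (x : Polynomial Fq) :
    chiD e (g * r) (r * x) = chiD e g x := by
  have h : (toK (r * x) : LaurentSeries Fq) / toK (g * r) = toK x / toK g := by
    rw [toK_mul, toK_mul, mul_comm (toK r) (toK x)]
    exact mul_div_mul_right _ _ (toK_ne_zero hr)
  show e ((toK (r * x) / toK (g * r) : LaurentSeries Fq).coeff 1)
      = e ((toK x / toK g : LaurentSeries Fq).coeff 1)
  rw [h]

lemma addChar_map_sum {A : Type*} [AddCommMonoid A] (ψ : AddChar A ℂ) {ι : Type*}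
    (s : Finset ι) (f : ι → A) : ψ (∑ i ∈ s, f i) = ∏ i ∈ s, ψ (f i) := by
  classical
  induction s using Finset.cons_induction with
  | empty => simpa using ψ.map_zero_eq_one
  | cons a s ha ih => rw [Finset.sum_cons, Finset.prod_cons, ψ.map_add_eq_mul, ih]

/-- Orthogonality: the sum of `ψ(m b / g)` over residues `b mod g` vanishes unless `g ∣ m`. -/
lemma ortho (e : AddChar Fq ℂ) (he : e ≠ 1) {g : Polynomial Fq} (hg : g ≠ 0)
    {m : Polynomial Fq} (hm : ¬ g ∣ m) :
    ∑ v : Fin g.natDegree → Fq, chiD e g (m * polyOf v) = 0 := by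
  classical
  let φ : AddChar (Fin g.natDegree → Fq) ℂ :=
    { toFun := fun v => chiD e g (m * polyOf v)
      map_zero_eq_one' := by
        simp only [polyOf_zero, mul_zero]
        exact (chiD e g).map_zero_eq_one
      map_add_eq_mul' := fun v w => by
        simp only [polyOf_add, mul_add]
        exact (chiD e g).map_add_eq_mul _ _ }
  have hφ : ∀ v, chiD e g (m * polyOf v) = φ v := fun _ => rfl
  simp only [hφ]
  apply AddChar.sum_eq_zero_of_ne_one
  -- now show φ is nontrivial
  have hdg : g.natDegree ≠ 0 := by
    intro h0
    apply hm
    have hu : IsUnit g := by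
      rw [Polynomial.eq_C_of_natDegree_eq_zero h0]
      apply Polynomial.isUnit_C.mpr
      apply isUnit_iff_ne_zero.mpr
      intro hc
      apply hg
      rw [Polynomial.eq_C_of_natDegree_eq_zero h0, hc, map_zero]
    exact hu.dvd
  have hgl : g.leadingCoeff ≠ 0 := Polynomial.leadingCoeff_ne_zero.mpr hg
  set g1 : Polynomial Fq := g * Polynomial.C (g.leadingCoeff)⁻¹ with hg1
  have hmonic : g1.Monic := Polynomial.monic_mul_leadingCoeff_inv hg
  have hgdvd : g ∣ g1 := ⟨Polynomial.C (g.leadingCoeff)⁻¹, rfl⟩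
  have hm'0 : m %ₘ g1 ≠ 0 := by
    intro h0
    exact hm (dvd_trans hgdvd ((Polynomial.modByMonic_eq_zero_iff_dvd hmonic).mp h0))
  have hdm : (m %ₘ g1).natDegree < g.natDegree := by
    have h7 : (m %ₘ g1).degree < g.degree := by
      have := Polynomial.degree_modByMonic_lt m hmonic
      rwa [hg1, Polynomial.degree_mul_leadingCoeff_inv _ hg] at this
    exact Polynomial.natDegree_lt_natDegree hm'0 h7
  obtain ⟨x₀, hx₀⟩ := AddChar.ne_one_iff.mp he
  have hx0 : x₀ ≠ 0 := by
    rintro rfl; exact hx₀ e.map_zero_eq_one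
  have hml : (m %ₘ g1).leadingCoeff ≠ 0 := Polynomial.leadingCoeff_ne_zero.mpr hm'0
  set s : Fq := x₀ * g.leadingCoeff * ((m %ₘ g1).leadingCoeff)⁻¹ with hs
  have hs0 : s ≠ 0 := by
    apply mul_ne_zero (mul_ne_zero hx0 hgl) (inv_ne_zero hml)
  set w : Polynomial Fq := Polynomial.C s * Polynomial.X ^ (g.natDegree - 1 - (m %ₘ g1).natDegree)
    with hw
  have hw0 : w ≠ 0 := by
    rw [hw]
    apply mul_ne_zero (by simpa using hs0) (pow_ne_zero _ Polynomial.X_ne_zero)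
  have hwdeg : w.degree < (g.natDegree : ℕ) := by
    rw [hw, Polynomial.degree_C_mul_X_pow _ hs0]
    exact_mod_cast by omega
  rw [AddChar.ne_one_iff]
  refine ⟨toT g.natDegree w, ?_⟩
  show chiD e g (m * polyOf (toT g.natDegree w)) ≠ 1
  rw [polyOf_toT hwdeg]
  have hdecomp : m * w = g * (Polynomial.C (g.leadingCoeff)⁻¹ * (m /ₘ g1) * w) + (m %ₘ g1) * w := by
    have h8 := Polynomial.modByMonic_add_div m g1
    calc m * w = (m %ₘ g1 + g1 * (m /ₘ g1)) * w := by rw [h8]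
    _ = g * (Polynomial.C (g.leadingCoeff)⁻¹ * (m /ₘ g1) * w) + (m %ₘ g1) * w := by
        rw [hg1]; ring
  rw [hdecomp, (chiD e g).map_add_eq_mul, chiD_mul_denom e hg, one_mul]
  show e ((toK ((m %ₘ g1) * w) / toK g : LaurentSeries Fq).coeff 1) ≠ 1
  have hp0 : (m %ₘ g1) * w ≠ 0 := mul_ne_zero hm'0 hw0
  have hdeg : ((m %ₘ g1) * w).natDegree + 1 = g.natDegree := by
    rw [Polynomial.natDegree_mul hm'0 hw0, hw, Polynomial.natDegree_C_mul_X_pow _ _ hs0]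
    omega
  rw [coeff_one_div hp0 hg hdeg]
  have hlead : ((m %ₘ g1) * w).leadingCoeff = x₀ * g.leadingCoeff := by
    rw [Polynomial.leadingCoeff_mul, hw, Polynomial.leadingCoeff_C_mul_X_pow, hs]
    field_simp
  rw [hlead]
  have h9 : x₀ * g.leadingCoeff * g.leadingCoeff⁻¹ = x₀ := by field_simp
  rw [h9]
  exact hx₀

end FF

namespace FF
variable {Fq : Type*} [Field Fq] [Fintype Fq]

/-- The coordinatewise CRT-style parametrization of residues mod `g*r`. -/
def Phi (g r : Polynomial Fq) (su : (Fin r.natDegree → Fq) × (Fin g.natDegree → Fq)) :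
    Fin (g * r).natDegree → Fq :=
  toT _ (polyOf su.1 + r * polyOf su.2)

lemma degree_comb_lt {g r : Polynomial Fq} (hg : g ≠ 0) (hr : r ≠ 0)
    (s : Fin r.natDegree → Fq) (u : Fin g.natDegree → Fq) :
    (polyOf s + r * polyOf u).degree < ((g * r).natDegree : ℕ) := by
  have hN : (g * r).natDegree = g.natDegree + r.natDegree := Polynomial.natDegree_mul hg hr
  apply lt_of_le_of_lt (Polynomial.degree_add_le _ _)
  apply max_lt
  · refine lt_of_lt_of_le (polyOf_degree_lt s) ?_
    exact_mod_cast by omega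
  · calc (r * polyOf u).degree = r.degree + (polyOf u).degree := Polynomial.degree_mul
    _ < ((g * r).natDegree : ℕ) := by
        rw [Polynomial.degree_eq_natDegree hr, hN]
        have h1 : (polyOf u).degree < (g.natDegree : ℕ) := polyOf_degree_lt u
        have h2 : ((g.natDegree + r.natDegree : ℕ) : WithBot ℕ)
            = ((r.natDegree : ℕ) : WithBot ℕ) + ((g.natDegree : ℕ) : WithBot ℕ) := by
          push_cast; rw [add_comm]
        rw [h2]
        exact WithBot.add_lt_add_left (by simp) h1

lemma polyOf_Phi {g r : Polynomial Fq} (hg : g ≠ 0) (hr : r ≠ 0)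
    (su : (Fin r.natDegree → Fq) × (Fin g.natDegree → Fq)) :
    polyOf (Phi g r su) = polyOf su.1 + r * polyOf su.2 :=
  polyOf_toT (degree_comb_lt hg hr su.1 su.2)

lemma Phi_bijective {g r : Polynomial Fq} (hg : g ≠ 0) (hr : r ≠ 0) :
    Function.Bijective (Phi g r) := by
  classical
  rw [Fintype.bijective_iff_injective_and_card]
  constructor
  · intro x y h
    have hxy : polyOf x.1 + r * polyOf x.2 = polyOf y.1 + r * polyOf y.2 := by
      rw [← polyOf_Phi hg hr x, ← polyOf_Phi hg hr y, h]
    have hdvd : r ∣ (polyOf x.1 - polyOf y.1) := ⟨polyOf y.2 - polyOf x.2, by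
      linear_combination hxy⟩
    have h0 : polyOf x.1 - polyOf y.1 = 0 := by
      apply Polynomial.eq_zero_of_dvd_of_degree_lt hdvd
      apply lt_of_le_of_lt (Polynomial.degree_sub_le _ _)
      rw [Polynomial.degree_eq_natDegree hr]
      exact max_lt (polyOf_degree_lt x.1) (polyOf_degree_lt y.1)
    have h1 : polyOf x.1 = polyOf y.1 := sub_eq_zero.mp h0
    have h2 : polyOf x.2 = polyOf y.2 := by
      have h3 : r * polyOf x.2 = r * polyOf y.2 := by
        rw [h1] at hxy
        exact add_left_cancel hxy
      exact mul_left_cancel₀ hr h3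
    exact Prod.ext (polyOf_injective h1) (polyOf_injective h2)
  · simp only [Fintype.card_prod, Fintype.card_fun, Fintype.card_fin,
      Polynomial.natDegree_mul hg hr, pow_add, mul_comm]

/-- The parametrization applied coordinatewise over `Fin d`. -/
def Psi (d : ℕ) (g r : Polynomial Fq)
    (p : (Fin d → (Fin r.natDegree → Fq)) × (Fin d → (Fin g.natDegree → Fq))) :
    Fin d → Fin (g * r).natDegree → Fq :=
  fun i => Phi g r (p.1 i, p.2 i)

lemma Psi_bijective {d : ℕ} {g r : Polynomial Fq} (hg : g ≠ 0) (hr : r ≠ 0) :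
    Function.Bijective (Psi d g r) := by
  constructor
  · intro p q h
    have hi : ∀ i, Phi g r (p.1 i, p.2 i) = Phi g r (q.1 i, q.2 i) := fun i => congrFun h i
    have hpq : ∀ i, (p.1 i, p.2 i) = (q.1 i, q.2 i) := fun i => (Phi_bijective hg hr).1 (hi i)
    refine Prod.ext (funext fun i => ?_) (funext fun i => ?_)
    · exact congrArg Prod.fst (hpq i)
    · exact congrArg Prod.snd (hpq i)
  · intro b
    choose sv hsv using fun i => (Phi_bijective hg hr).2 (b i)
    refine ⟨(fun i => (sv i).1, fun i => (sv i).2), funext fun i => ?_⟩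
    simpa [Psi] using hsv i

lemma sym_swap {d : ℕ} (A : Matrix (Fin d) (Fin d) (Polynomial Fq)) (hA : A.IsSymm)
    (lam U : Fin d → Polynomial Fq) :
    ∑ i, ∑ j, lam i * A i j * U j = ∑ i, (∑ j, A i j * lam j) * U i := by
  rw [Finset.sum_comm]
  apply Finset.sum_congr rfl
  intro i _
  rw [Finset.sum_mul]
  apply Finset.sum_congr rfl
  intro j _
  rw [← hA.apply i j]
  ring

/-- The key polynomial identity behind the shift `b ↦ b + r u`. -/
lemma key_identity {d : ℕ} (A : Matrix (Fin d) (Fin d) (Polynomial Fq)) (hA : A.IsSymm)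
    (a ℓ r g k : Polynomial Fq) (lam c S U : Fin d → Polynomial Fq) :
    (a + r * ℓ) * (2 * (∑ i, ∑ j, lam i * A i j * (S j + r * U j)) - k) +
        a * g * (∑ i, ∑ j, (S i + r * U i) * A i j * (S j + r * U j)) -
        ∑ i, c i * (S i + r * U i)
    = ((a + r * ℓ) * (2 * (∑ i, ∑ j, lam i * A i j * S j) - k) +
        a * g * (∑ i, ∑ j, S i * A i j * S j) - ∑ i, c i * S i)
      + (r * ∑ i, (2 * (a + r * ℓ) * (∑ j, A i j * lam j) - c i) * U i
         + g * r * (a * ((∑ i, ∑ j, S i * A i j * U j) + (∑ i, ∑ j, U i * A i j * S j)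
              + r * ∑ i, ∑ j, U i * A i j * U j))) := by
  have lin : ∑ i, ∑ j, lam i * A i j * (S j + r * U j)
      = (∑ i, ∑ j, lam i * A i j * S j) + r * ∑ i, (∑ j, A i j * lam j) * U i := by
    have h : ∀ i j : Fin d, lam i * A i j * (S j + r * U j)
        = lam i * A i j * S j + r * (lam i * A i j * U j) := by intros; ring
    simp only [h, Finset.sum_add_distrib, ← Finset.mul_sum]
    rw [sym_swap A hA lam U]
  have quad : ∑ i, ∑ j, (S i + r * U i) * A i j * (S j + r * U j)
      = (∑ i, ∑ j, S i * A i j * S j)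
        + r * ((∑ i, ∑ j, S i * A i j * U j) + (∑ i, ∑ j, U i * A i j * S j)
            + r * ∑ i, ∑ j, U i * A i j * U j) := by
    have h : ∀ i j : Fin d, (S i + r * U i) * A i j * (S j + r * U j)
        = S i * A i j * S j + (r * (S i * A i j * U j) + (r * (U i * A i j * S j)
            + r * (r * (U i * A i j * U j)))) := by intros; ring
    simp only [h, Finset.sum_add_distrib, ← Finset.mul_sum]
    ring
  have linc : ∑ i, c i * (S i + r * U i)
      = (∑ i, c i * S i) + r * ∑ i, c i * U i := by
    have h : ∀ i : Fin d, c i * (S i + r * U i) = c i * S i + r * (c i * U i) := by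
      intros; ring
    simp only [h, Finset.sum_add_distrib, ← Finset.mul_sum]
  have h4 : ∑ i, (2 * (a + r * ℓ) * (∑ j, A i j * lam j) - c i) * U i
      = 2 * (a + r * ℓ) * (∑ i, (∑ j, A i j * lam j) * U i) - ∑ i, c i * U i := by
    rw [Finset.mul_sum, ← Finset.sum_sub_distrib]
    apply Finset.sum_congr rfl
    intros; ring
  rw [lin, quad, linc, h4]
  ring

end FF

open FF in
/-- vanishing of `S_{g,r}(a,ℓ,c)`.  Unless `c ≡ 2(a+rℓ)Aλ (mod g)`,
the sum `S_{g,r}(a,ℓ,c)` vanishes.  Consequently `S_{g,r}(c) = 0` unless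
`c ≡ αAλ (mod g)` for some `α ∈ 𝔽_q[t]`. -/
theorem Sterm_vanishing {Fq : Type*} [Field Fq] [Fintype Fq]
    (hq : Odd (Fintype.card Fq)) (e : AddChar Fq ℂ) (he : e ≠ 1) {d : ℕ}
    (A : Matrix (Fin d) (Fin d) (Polynomial Fq)) (hA : A.IsSymm)
    (g r k : Polynomial Fq) (hg : g ≠ 0) (hr : r ≠ 0)
    (lam : Fin d → Polynomial Fq) (c : Fin d → Polynomial Fq) :
    (∀ a ℓ : Polynomial Fq,
      ¬ (∀ i, g ∣ (c i - 2 * (a + r * ℓ) * ∑ j, A i j * lam j)) →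
        Sterm e A g r k lam a ℓ c = 0) ∧
    (¬ (∃ α : Polynomial Fq, ∀ i, g ∣ (c i - α * ∑ j, A i j * lam j)) →
      Sfull e A g r k lam c = 0) := by
  classical
  have hgr : g * r ≠ 0 := mul_ne_zero hg hr
  have part1 : ∀ a ℓ : Polynomial Fq,
      ¬ (∀ i, g ∣ (c i - 2 * (a + r * ℓ) * ∑ j, A i j * lam j)) →
        Sterm e A g r k lam a ℓ c = 0 := by
    intro a ℓ hcond
    obtain ⟨i₀, hi₀⟩ := not_forall.mp hcond
    have hgm : ¬ g ∣ (2 * (a + r * ℓ) * (∑ j, A i₀ j * lam j) - c i₀) := by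
      intro hd
      apply hi₀
      have hd2 := dvd_neg.mpr hd
      rwa [neg_sub] at hd2
    have hreindex := Fintype.sum_bijective (Psi d g r) (Psi_bijective hg hr)
      (fun p => psi e (toK ((a + r * ℓ) *
          (2 * (∑ i, ∑ j, lam i * A i j * polyOf (Psi d g r p j)) - k) +
          a * g * (∑ i, ∑ j, polyOf (Psi d g r p i) * A i j * polyOf (Psi d g r p j)) -
          ∑ i, c i * polyOf (Psi d g r p i)) / toK (g * r)))
      (fun b => psi e (toK ((a + r * ℓ) *
          (2 * (∑ i, ∑ j, lam i * A i j * polyOf (b j)) - k) +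
          a * g * (∑ i, ∑ j, polyOf (b i) * A i j * polyOf (b j)) -
          ∑ i, c i * polyOf (b i)) / toK (g * r)))
      (fun p => rfl)
    have hS2 : Sterm e A g r k lam a ℓ c
        = ∑ p : (Fin d → (Fin r.natDegree → Fq)) × (Fin d → (Fin g.natDegree → Fq)),
            psi e (toK ((a + r * ℓ) *
              (2 * (∑ i, ∑ j, lam i * A i j * polyOf (Psi d g r p j)) - k) +
              a * g * (∑ i, ∑ j, polyOf (Psi d g r p i) * A i j * polyOf (Psi d g r p j)) -
              ∑ i, c i * polyOf (Psi d g r p i)) / toK (g * r)) := hreindex.symm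
    rw [hS2, Fintype.sum_prod_type]
    refine Finset.sum_eq_zero fun s _ => ?_
    have hstep : ∀ u : Fin d → Fin g.natDegree → Fq,
        psi e (toK ((a + r * ℓ) *
            (2 * (∑ i, ∑ j, lam i * A i j * polyOf (Psi d g r (s, u) j)) - k) +
            a * g * (∑ i, ∑ j, polyOf (Psi d g r (s, u) i) * A i j *
              polyOf (Psi d g r (s, u) j)) -
            ∑ i, c i * polyOf (Psi d g r (s, u) i)) / toK (g * r))
        = chiD e (g * r) ((a + r * ℓ) *
              (2 * (∑ i, ∑ j, lam i * A i j * polyOf (s j)) - k) +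
              a * g * (∑ i, ∑ j, polyOf (s i) * A i j * polyOf (s j)) -
              ∑ i, c i * polyOf (s i)) *
            ∏ i, chiD e g ((2 * (a + r * ℓ) * (∑ j, A i j * lam j) - c i) * polyOf (u i)) := by
      intro u
      have hP : ∀ j, polyOf (Psi d g r (s, u) j) = polyOf (s j) + r * polyOf (u j) :=
        fun j => polyOf_Phi hg hr (s j, u j)
      show chiD e (g * r) ((a + r * ℓ) *
            (2 * (∑ i, ∑ j, lam i * A i j * polyOf (Psi d g r (s, u) j)) - k) +
            a * g * (∑ i, ∑ j, polyOf (Psi d g r (s, u) i) * A i j *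
              polyOf (Psi d g r (s, u) j)) -
            ∑ i, c i * polyOf (Psi d g r (s, u) i)) = _
      simp only [hP]
      have KI := key_identity A hA a ℓ r g k lam c
        (fun j => polyOf (s j)) (fun j => polyOf (u j))
      beta_reduce at KI
      rw [KI, (chiD e (g * r)).map_add_eq_mul, (chiD e (g * r)).map_add_eq_mul,
        chiD_mul_denom e hgr, mul_one, chiD_shift e hr,
        addChar_map_sum (chiD e g) Finset.univ
          (fun i => (2 * (a + r * ℓ) * (∑ j, A i j * lam j) - c i) * polyOf (u i))]
    calc (∑ u : Fin d → Fin g.natDegree → Fq,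
            psi e (toK ((a + r * ℓ) *
              (2 * (∑ i, ∑ j, lam i * A i j * polyOf (Psi d g r (s, u) j)) - k) +
              a * g * (∑ i, ∑ j, polyOf (Psi d g r (s, u) i) * A i j *
                polyOf (Psi d g r (s, u) j)) -
              ∑ i, c i * polyOf (Psi d g r (s, u) i)) / toK (g * r)))
        = ∑ u : Fin d → Fin g.natDegree → Fq,
            chiD e (g * r) ((a + r * ℓ) *
              (2 * (∑ i, ∑ j, lam i * A i j * polyOf (s j)) - k) +
              a * g * (∑ i, ∑ j, polyOf (s i) * A i j * polyOf (s j)) -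
              ∑ i, c i * polyOf (s i)) *
            ∏ i, chiD e g ((2 * (a + r * ℓ) * (∑ j, A i j * lam j) - c i) * polyOf (u i)) :=
          Finset.sum_congr rfl fun u _ => hstep u
      _ = chiD e (g * r) ((a + r * ℓ) *
              (2 * (∑ i, ∑ j, lam i * A i j * polyOf (s j)) - k) +
              a * g * (∑ i, ∑ j, polyOf (s i) * A i j * polyOf (s j)) -
              ∑ i, c i * polyOf (s i)) *
            ∑ u : Fin d → Fin g.natDegree → Fq,
              ∏ i, chiD e g ((2 * (a + r * ℓ) * (∑ j, A i j * lam j) - c i) * polyOf (u i)) := by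
          rw [← Finset.mul_sum]
      _ = 0 := by
          rw [← Fintype.prod_sum
              (fun i (v : Fin g.natDegree → Fq) =>
                chiD e g ((2 * (a + r * ℓ) * (∑ j, A i j * lam j) - c i) * polyOf v)),
            Finset.prod_eq_zero (Finset.mem_univ i₀) (ortho e he hg hgm), mul_zero]
  refine ⟨part1, ?_⟩
  intro hne
  have hz : Sfull e A g r k lam c
      = ∑ ℓ : Fin g.natDegree → Fq, ∑ a : Fin r.natDegree → Fq,
          (if IsCoprime (polyOf a) r then Sterm e A g r k lam (polyOf a) (polyOf ℓ) c
           else 0) := rfl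
  rw [hz]
  refine Finset.sum_eq_zero fun ℓ _ => Finset.sum_eq_zero fun a _ => ?_
  by_cases hcop : IsCoprime (polyOf a) r
  · rw [if_pos hcop]
    apply part1
    intro hall
    exact hne ⟨2 * (polyOf a + r * polyOf ℓ), hall⟩
  · rw [if_neg hcop]
end
end
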